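/- Every marked permutation of S_n (a permutation together with a chosen subset of its bonds) corresponds bijectively to a pair (λ, τ) where λ = (a_1,…,a_m) is an arrowed composition of n (a composition where each part > 1 carries a direction ↑ or ↓) and τ ∈ S_m, via writing the permutation as the inflation of τ by monotone runs given by the parts of λ, with marked bonds exactly the bonds inside the runs corresponding to parts of λ. -/

import Mathlib

/-- The entry at position `k` of `σ` (0-indexed) is a *vertical separator*:
there are positions `j, j+1, j+2` with `k = j+1` and `|σ j - σ (j+2)| = 1`. -/
def IsVSepPos {n : ℕ} (σ : Equiv.Perm (Fin n)) (k : Fin n) : Prop :=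
  ∃ (j : ℕ) (h : j + 2 < n), (k : ℕ) = j + 1 ∧
    (((σ ⟨j, by omega⟩).val : ℤ) - ((σ ⟨j + 2, h⟩).val : ℤ)).natAbs = 1

/-- The value `b` is a vertical separator of `σ`. -/
def IsVSepVal {n : ℕ} (σ : Equiv.Perm (Fin n)) (b : Fin n) : Prop :=
  IsVSepPos σ (σ⁻¹ b)

/-- The value `a` is a *horizontal separator* of `σ`: the values `a-1` and `a+1`
occupy adjacent positions of `σ` (their sum is `2a` and they differ by `2`). -/
def IsHSepVal {n : ℕ} (σ : Equiv.Perm (Fin n)) (a : Fin n) : Prop :=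
  ∃ (j : ℕ) (h : j + 1 < n),
    (((σ ⟨j, by omega⟩).val : ℤ) - ((σ ⟨j + 1, h⟩).val : ℤ)).natAbs = 2 ∧
    ((σ ⟨j, by omega⟩).val : ℤ) + ((σ ⟨j + 1, h⟩).val : ℤ) = 2 * (a : ℤ)

/-- `σ` has a bond at positions `j, j+1`. -/
def PermBondAt {n : ℕ} (σ : Equiv.Perm (Fin n)) (j : ℕ) (h : j + 1 < n) : Prop :=
  (((σ ⟨j, by omega⟩).val : ℤ) - ((σ ⟨j + 1, h⟩).val : ℤ)).natAbs = 1

/-- The sequence obtained from `σ` by deleting the entry at position `p`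
and standardizing. -/
def delSeq {n : ℕ} (σ : Equiv.Perm (Fin n)) (p : Fin n) : Fin (n - 1) → ℕ :=
  fun k =>
    let q : Fin n :=
      if (k : ℕ) < (p : ℕ) then ⟨k, by have := k.isLt; omega⟩
      else ⟨(k : ℕ) + 1, by have := k.isLt; omega⟩
    if (σ q).val < (σ p).val then (σ q).val else (σ q).val - 1

/-- A sequence has a bond at positions `j, j+1`. -/
def SeqBondAt {m : ℕ} (g : Fin m → ℕ) (j : ℕ) (h : j + 1 < m) : Prop :=
  ((g ⟨j, by omega⟩ : ℤ) - (g ⟨j + 1, h⟩ : ℤ)).natAbs = 1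

/-- The number of bonds of a sequence. -/
noncomputable def seqBondCount {m : ℕ} (g : Fin m → ℕ) : ℕ :=
  Nat.card {p : Fin m × Fin m //
    (p.2 : ℕ) = (p.1 : ℕ) + 1 ∧ ((g p.1 : ℤ) - (g p.2 : ℤ)).natAbs = 1}

/-- The number of bonds of `σ`. -/
noncomputable def bondCount {n : ℕ} (σ : Equiv.Perm (Fin n)) : ℕ :=
  Nat.card {p : Fin n × Fin n //
    (p.2 : ℕ) = (p.1 : ℕ) + 1 ∧ (((σ p.1).val : ℤ) - ((σ p.2).val : ℤ)).natAbs = 1}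

/-- Data of a decomposition of a permutation of `S_n` into `m` monotone runs:
an arrowed composition (`size` with direction `dirn`, `true` = increasing)
together with a permutation `perm ∈ S_m` giving the relative order of the runs.
A part of size `1` carries no meaningful arrow; this is normalized by
requiring `dirn = true` on such parts in the statement below. -/
structure RunData (n : ℕ) where
  m : ℕ
  size : Fin m → ℕ
  dirn : Fin m → Bool
  perm : Equiv.Perm (Fin m)
  size_pos : ∀ i, 1 ≤ size i
  sum_eq : ∑ i, size i = n

/-- Starting position of the `i`-th run. -/
noncomputable def runStart {n : ℕ} (R : RunData n) (i : Fin R.m) : ℕ :=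
  ∑ j ∈ Finset.univ.filter (fun j : Fin R.m => (j : ℕ) < (i : ℕ)), R.size j

/-- Smallest value of the `i`-th run (its value interval is determined by the
relative order `R.perm` of the runs). -/
noncomputable def runBase {n : ℕ} (R : RunData n) (i : Fin R.m) : ℕ :=
  ∑ j ∈ Finset.univ.filter (fun j : Fin R.m => R.perm j < R.perm i), R.size j

/-- `R` realizes the marked permutation `(σ, M)`: `σ` is the inflation of
`R.perm` by the monotone runs prescribed by `R`, and the marked bonds `M` are
exactly the bonds inside the runs. -/
def RealizesRun {n : ℕ} (R : RunData n) (σ : Equiv.Perm (Fin n)) (M : Set ℕ) : Prop :=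
  (∀ (i : Fin R.m) (r : ℕ), r < R.size i →
    ∀ h : runStart R i + r < n,
      (σ ⟨runStart R i + r, h⟩).val
        = runBase R i + (if R.dirn i then r else R.size i - 1 - r)) ∧
  M = {p : ℕ | ∃ (i : Fin R.m) (r : ℕ), r + 1 < R.size i ∧ p = runStart R i + r}


open Finset
open scoped Classical

/-- number of non-marked positions (breaks) strictly below `k` -/
noncomputable def idxM (M : Set ℕ) (k : ℕ) : ℕ :=
  ((Finset.range k).filter (fun p => p ∉ M)).card

lemma idxM_zero (M : Set ℕ) : idxM M 0 = 0 := by simp [idxM]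

lemma idxM_succ (M : Set ℕ) (k : ℕ) :
    idxM M (k + 1) = idxM M k + (if k ∈ M then 0 else 1) := by
  unfold idxM
  rw [Finset.range_add_one, Finset.filter_insert]
  by_cases h : k ∈ M
  · simp [h]
  · rw [if_pos h, Finset.card_insert_of_notMem (by simp), if_neg h]

lemma idxM_mono (M : Set ℕ) {a b : ℕ} (hab : a ≤ b) : idxM M a ≤ idxM M b :=
  Finset.card_le_card (Finset.filter_subset_filter _ (Finset.range_subset_range.mpr hab))

lemma idxM_surj (M : Set ℕ) : ∀ k i, i ≤ idxM M k → ∃ k' ≤ k, idxM M k' = i := by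
  intro k
  induction k with
  | zero =>
    intro i hi
    rw [idxM_zero] at hi
    exact ⟨0, le_refl _, by rw [idxM_zero]; omega⟩
  | succ k ih =>
    intro i hi
    by_cases h : i ≤ idxM M k
    · obtain ⟨k', hk', hk''⟩ := ih i h
      exact ⟨k', by omega, hk''⟩
    · have hs := idxM_succ M k
      refine ⟨k + 1, le_refl _, ?_⟩
      by_cases hM : k ∈ M <;> simp [hM] at hs <;> omega

lemma mem_of_idx_eq (M : Set ℕ) (k : ℕ) (hk : idxM M (k + 1) = idxM M k) : k ∈ M := by
  have := idxM_succ M k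
  by_cases h : k ∈ M
  · exact h
  · rw [if_neg h] at this; omega

lemma not_mem_of_idx_ne (M : Set ℕ) (k : ℕ) (hk : idxM M (k + 1) ≠ idxM M k) : k ∉ M := by
  intro h
  have := idxM_succ M k
  rw [if_pos h] at this; omega

private lemma dcRange (T : Finset ℕ) (h : ∀ y ∈ T, ∀ z, z ≤ y → z ∈ T) :
    ∀ x, x ∈ T ↔ x < T.card := by
  intro x
  constructor
  · intro hx
    have hsub : Finset.range (x + 1) ⊆ T := by
      intro z hz
      exact h x hx z (Nat.lt_succ_iff.mp (Finset.mem_range.mp hz))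
    have := Finset.card_le_card hsub
    simp [Finset.card_range] at this
    omega
  · intro hx
    by_contra hxT
    have hsub : T ⊆ Finset.range x := by
      intro y hy
      rw [Finset.mem_range]
      by_contra hy'
      exact hxT (h y hy x (le_of_not_gt hy'))
    have := Finset.card_le_card hsub
    simp [Finset.card_range] at this
    omega

/-- size of the `i`-th block -/
noncomputable def SzC (M : Set ℕ) (n i : ℕ) : ℕ :=
  ((Finset.range n).filter (fun k => idxM M k = i)).card

/-- start of the `i`-th block -/
noncomputable def StC (M : Set ℕ) (n i : ℕ) : ℕ :=
  ((Finset.range n).filter (fun k => idxM M k < i)).card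

lemma StC_char (M : Set ℕ) (n i : ℕ) :
    ∀ k, k < StC M n i ↔ k < n ∧ idxM M k < i := by
  intro k
  have hdc : ∀ y ∈ (Finset.range n).filter (fun k => idxM M k < i),
      ∀ z, z ≤ y → z ∈ (Finset.range n).filter (fun k => idxM M k < i) := by
    intro y hy z hz
    simp only [Finset.mem_filter, Finset.mem_range] at hy ⊢
    exact ⟨by omega, lt_of_le_of_lt (idxM_mono M hz) hy.2⟩
  have := (dcRange _ hdc k).symm
  unfold StC
  rw [this]
  simp [Finset.mem_filter, Finset.mem_range]

lemma StC_succ (M : Set ℕ) (n i : ℕ) : StC M n (i + 1) = StC M n i + SzC M n i := by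
  unfold StC SzC
  rw [Finset.card_filter, Finset.card_filter, Finset.card_filter, ← Finset.sum_add_distrib]
  refine Finset.sum_congr rfl fun k _ => ?_
  split_ifs <;> omega

lemma StC_zero (M : Set ℕ) (n : ℕ) : StC M n 0 = 0 := by
  simp [StC]

lemma StC_eq_sum (M : Set ℕ) (n : ℕ) : ∀ i, StC M n i = ∑ j ∈ Finset.range i, SzC M n j := by
  intro i
  induction i with
  | zero => simp [StC_zero]
  | succ i ih => rw [StC_succ, Finset.sum_range_succ, ih]

lemma StC_mono (M : Set ℕ) (n : ℕ) {i j : ℕ} (hij : i ≤ j) : StC M n i ≤ StC M n j := by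
  apply Finset.card_le_card
  intro x hx
  simp only [Finset.mem_filter] at hx ⊢
  exact ⟨hx.1, by omega⟩

section WithBound

variable {n : ℕ}

lemma idxM_lt (M : Set ℕ) (hM1 : ∀ p ∈ M, p + 1 < n) :
    ∀ k < n, idxM M k < idxM M n := by
  intro k hk
  have h0 : 0 < n := by omega
  have hnm : n - 1 ∉ M := fun h => by have := hM1 _ h; omega
  have hs := idxM_succ M (n - 1)
  rw [if_neg hnm] at hs
  have he : n - 1 + 1 = n := by omega
  rw [he] at hs
  have := idxM_mono M (show k ≤ n - 1 by omega)
  omega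

lemma SzC_pos (M : Set ℕ) (hM1 : ∀ p ∈ M, p + 1 < n) :
    ∀ i < idxM M n, 1 ≤ SzC M n i := by
  intro i hi
  obtain ⟨k', hk', hik⟩ := idxM_surj M n i (by omega)
  have hkn : k' < n := by
    rcases Nat.lt_or_ge k' n with h | h
    · exact h
    · have hkeq : k' = n := by omega
      rw [hkeq] at hik
      omega
  rw [SzC]
  have : k' ∈ (Finset.range n).filter (fun k => idxM M k = i) := by
    simp [Finset.mem_filter, Finset.mem_range, hkn, hik]
  have := Finset.card_pos.mpr ⟨k', this⟩
  omega

lemma SzC_zero_of_ge (M : Set ℕ) (hM1 : ∀ p ∈ M, p + 1 < n) {i : ℕ}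
    (hi : idxM M n ≤ i) : SzC M n i = 0 := by
  rw [SzC, Finset.card_eq_zero, Finset.filter_eq_empty_iff]
  intro k hk
  have := idxM_lt M hM1 k (Finset.mem_range.mp hk)
  omega

lemma StC_top (M : Set ℕ) (hM1 : ∀ p ∈ M, p + 1 < n) : StC M n (idxM M n) = n := by
  rw [StC, Finset.filter_true_of_mem, Finset.card_range]
  intro k hk
  exact idxM_lt M hM1 k (Finset.mem_range.mp hk)

lemma blockC (M : Set ℕ) (hM1 : ∀ p ∈ M, p + 1 < n) (k : ℕ) (hk : k < n) (i : ℕ) :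
    idxM M k = i ↔ StC M n i ≤ k ∧ k < StC M n (i + 1) := by
  constructor
  · rintro rfl
    refine ⟨?_, (StC_char M n (idxM M k + 1) k).mpr ⟨hk, by omega⟩⟩
    by_contra h'
    have := (StC_char M n (idxM M k) k).mp (by omega)
    omega
  · rintro ⟨ha, hb⟩
    have h2 := ((StC_char M n (i + 1) k).mp hb).2
    have h3 : ¬ (k < StC M n i) := by omega
    have h5 : ¬ (idxM M k < i) := fun hc => h3 ((StC_char M n i k).mpr ⟨hk, hc⟩)
    omega

lemma posC (M : Set ℕ) (hM1 : ∀ p ∈ M, p + 1 < n) (i r : ℕ)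
    (hi : i < idxM M n) (hr : r < SzC M n i) :
    StC M n i + r < n ∧ idxM M (StC M n i + r) = i := by
  have h1 : StC M n i + r < StC M n (i + 1) := by
    have := StC_succ M n i; omega
  have h2 : StC M n (i + 1) ≤ n := by
    have := StC_mono M n (show i + 1 ≤ idxM M n from hi)
    rw [StC_top M hM1] at this
    exact this
  have hkn : StC M n i + r < n := by omega
  exact ⟨hkn, (blockC M hM1 _ hkn i).mpr ⟨by omega, h1⟩⟩

/-- total version of `σ` on ℕ -/
noncomputable def sval (σ : Equiv.Perm (Fin n)) (k : ℕ) : ℕ :=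
  if h : k < n then (σ ⟨k, h⟩).val else 0

lemma sval_eq (σ : Equiv.Perm (Fin n)) (k : ℕ) (h : k < n) :
    sval σ k = (σ ⟨k, h⟩).val := dif_pos h

lemma sval_lt (σ : Equiv.Perm (Fin n)) (k : ℕ) (h : k < n) : sval σ k < n := by
  rw [sval_eq σ k h]; exact (σ ⟨k, h⟩).isLt

lemma sval_inj (σ : Equiv.Perm (Fin n)) {a b : ℕ} (ha : a < n) (hb : b < n)
    (h : sval σ a = sval σ b) : a = b := by
  rw [sval_eq σ a ha, sval_eq σ b hb] at h
  have := σ.injective (Fin.val_injective h)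
  simpa using congrArg Fin.val this

/-- total version of `σ⁻¹` on ℕ -/
noncomputable def posv (σ : Equiv.Perm (Fin n)) (x : ℕ) : ℕ :=
  if h : x < n then (σ.symm ⟨x, h⟩).val else 0

lemma posv_lt (σ : Equiv.Perm (Fin n)) (x : ℕ) (hx : x < n) : posv σ x < n := by
  rw [posv, dif_pos hx]; exact (σ.symm ⟨x, hx⟩).isLt

lemma sval_posv (σ : Equiv.Perm (Fin n)) (x : ℕ) (hx : x < n) :
    sval σ (posv σ x) = x := by
  rw [posv, dif_pos hx, sval_eq σ _ (σ.symm ⟨x, hx⟩).isLt]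
  simp

lemma posv_eq (σ : Equiv.Perm (Fin n)) (k : ℕ) (hk : k < n) (x : ℕ)
    (hx : sval σ k = x) : posv σ x = k := by
  subst hx
  rw [sval_eq σ k hk, posv, dif_pos (σ ⟨k, hk⟩).isLt]
  simp

end WithBound

section Runs

variable {n : ℕ}

/-- direction indicator of block `i` : `+1` or `-1` -/
noncomputable def eC (σ : Equiv.Perm (Fin n)) (M : Set ℕ) (i : ℕ) : ℤ :=
  if 1 < SzC M n i then
    (sval σ (StC M n i + 1) : ℤ) - (sval σ (StC M n i) : ℤ)
  else 1

noncomputable def dC (σ : Equiv.Perm (Fin n)) (M : Set ℕ) (i : ℕ) : Bool :=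
  decide (eC σ M i = 1)

/-- minimum value of block `i` -/
noncomputable def vC (σ : Equiv.Perm (Fin n)) (M : Set ℕ) (i : ℕ) : ℕ :=
  if eC σ M i = 1 then sval σ (StC M n i)
  else sval σ (StC M n i + (SzC M n i - 1))

variable (σ : Equiv.Perm (Fin n)) (M : Set ℕ)
variable (hM : ∀ p ∈ M, ∃ h : p + 1 < n,
      (((σ ⟨p, by omega⟩).val : ℤ) - ((σ ⟨p + 1, h⟩).val : ℤ)).natAbs = 1)

include hM in
lemma bond_sval (k : ℕ) (hk : k ∈ M) :
    k + 1 < n ∧ ((sval σ (k + 1) : ℤ) - (sval σ k : ℤ)).natAbs = 1 := by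
  obtain ⟨h, hb⟩ := hM k hk
  have hk' : k < n := by omega
  rw [sval_eq σ (k + 1) h, sval_eq σ k hk']
  constructor
  · exact h
  · have hb' : (((σ ⟨k, hk'⟩).val : ℤ) - ((σ ⟨k + 1, h⟩).val : ℤ)).natAbs = 1 := hb
    omega

include hM in
lemma hM1_of (p : ℕ) (hp : p ∈ M) : p + 1 < n := (bond_sval σ M hM p hp).1

include hM in
lemma eC_abs (i : ℕ) (hi : i < idxM M n) (h2 : 1 < SzC M n i) :
    (eC σ M i).natAbs = 1 := by
  have hM1 : ∀ p ∈ M, p + 1 < n := hM1_of σ M hM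
  have p0 := posC M hM1 i 0 hi (by omega)
  have p1 := posC M hM1 i 1 hi h2
  have hmem : StC M n i ∈ M := by
    apply mem_of_idx_eq M (StC M n i)
    have e0 : StC M n i + 0 = StC M n i := by omega
    rw [e0] at p0
    rw [show StC M n i + 1 = StC M n i + 1 from rfl, p1.2, p0.2]
  have := (bond_sval σ M hM (StC M n i) hmem).2
  rw [eC, if_pos h2]
  omega

include hM in
lemma eC_spec (i : ℕ) (hi : i < idxM M n) :
    ∀ r k, r + 1 < SzC M n i → k = StC M n i + r →
      (sval σ (k + 1) : ℤ) - (sval σ k : ℤ) = eC σ M i := by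
  have hM1 : ∀ p ∈ M, p + 1 < n := hM1_of σ M hM
  intro r
  induction r with
  | zero =>
    intro k hr hk
    have h2 : 1 < SzC M n i := by omega
    rw [eC, if_pos h2]
    have : k = StC M n i := by omega
    rw [this]
  | succ r ih =>
    intro k hr hk
    -- bond at k
    have hpK : idxM M k = i := by
      rw [hk]; exact (posC M hM1 i (r + 1) hi (by omega)).2
    have hpK1 : idxM M (k + 1) = i := by
      have he : k + 1 = StC M n i + (r + 1 + 1) := by omega
      rw [he]; exact (posC M hM1 i (r + 1 + 1) hi (by omega)).2
    have hmem : k ∈ M := mem_of_idx_eq M k (by omega)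
    have hbond := (bond_sval σ M hM k hmem).2
    have habs := eC_abs σ M hM i hi (by omega)
    have h1 : (sval σ (StC M n i + r + 1) : ℤ) - (sval σ (StC M n i + r) : ℤ) = eC σ M i :=
      ih (StC M n i + r) (by omega) rfl
    have hke : StC M n i + r + 1 = k := by omega
    rw [hke] at h1
    by_cases hcase : (sval σ (k + 1) : ℤ) - (sval σ k : ℤ) = eC σ M i
    · exact hcase
    exfalso
    have hveq : sval σ (k + 1) = sval σ (StC M n i + r) := by omega
    have hk1n : k + 1 < n := by
      have := (posC M hM1 i (r + 1 + 1) hi (by omega)).1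
      omega
    have hrn : StC M n i + r < n := (posC M hM1 i r hi (by omega)).1
    have := sval_inj σ hk1n hrn hveq
    omega

include hM in
lemma valC (i : ℕ) (hi : i < idxM M n) :
    ∀ r k, r < SzC M n i → k = StC M n i + r →
      (sval σ k : ℤ) = (sval σ (StC M n i) : ℤ) + eC σ M i * r := by
  intro r
  induction r with
  | zero =>
    intro k hr hk
    have : k = StC M n i := by omega
    rw [this]; simp
  | succ r ih =>
    intro k hr hk
    have h1 := ih (StC M n i + r) (by omega) rfl
    have h2 := eC_spec σ M hM i hi r (StC M n i + r) (by omega) rfl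
    have hke : StC M n i + r + 1 = k := by omega
    rw [hke] at h2
    push_cast
    push_cast at h1 h2
    linear_combination h1 + h2

include hM in
lemma valC' (i : ℕ) (hi : i < idxM M n) (r k : ℕ) (hr : r < SzC M n i)
    (hk : k = StC M n i + r) :
    sval σ k = vC σ M i + (if dC σ M i then r else SzC M n i - 1 - r) := by
  have h0 := valC σ M hM i hi r k hr hk
  by_cases hd : eC σ M i = 1
  · have hdc : dC σ M i = true := by simp [dC, hd]
    rw [hdc, if_pos rfl, vC, if_pos hd]
    rw [hd] at h0
    omega
  · have h2 : 1 < SzC M n i := by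
      by_contra hc
      rw [eC, if_neg hc] at hd
      exact hd rfl
    have he : eC σ M i = -1 := by
      have := eC_abs σ M hM i hi h2
      omega
    have hdc : dC σ M i = false := by simp [dC, hd]
    rw [hdc, vC, if_neg hd]
    have hv := valC σ M hM i hi (SzC M n i - 1) (StC M n i + (SzC M n i - 1)) (by omega) rfl
    rw [he] at h0 hv
    simp only [Bool.false_eq_true, if_false]
    omega

end Runs

section Intervals

variable {n : ℕ}
variable (σ : Equiv.Perm (Fin n)) (M : Set ℕ)
variable (hM : ∀ p ∈ M, ∃ h : p + 1 < n,
      (((σ ⟨p, by omega⟩).val : ℤ) - ((σ ⟨p + 1, h⟩).val : ℤ)).natAbs = 1)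

include hM in
lemma memIv (k : ℕ) (hk : k < n) :
    vC σ M (idxM M k) ≤ sval σ k ∧
      sval σ k < vC σ M (idxM M k) + SzC M n (idxM M k) := by
  have hM1 : ∀ p ∈ M, p + 1 < n := hM1_of σ M hM
  have hi : idxM M k < idxM M n := idxM_lt M hM1 k hk
  have hb := (blockC M hM1 k hk (idxM M k)).mp rfl
  have hs := StC_succ M n (idxM M k)
  have hv := valC' σ M hM (idxM M k) hi (k - StC M n (idxM M k)) k (by omega) (by omega)
  rw [hv]
  have hszpos := SzC_pos M hM1 (idxM M k) hi
  split_ifs <;> constructor <;> omega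

include hM in
lemma surjIv (i : ℕ) (hi : i < idxM M n) (x : ℕ) (hx1 : vC σ M i ≤ x)
    (hx2 : x < vC σ M i + SzC M n i) :
    ∃ r < SzC M n i, sval σ (StC M n i + r) = x := by
  have hM1 : ∀ p ∈ M, p + 1 < n := hM1_of σ M hM
  have hszpos := SzC_pos M hM1 i hi
  by_cases hd : dC σ M i
  · refine ⟨x - vC σ M i, by omega, ?_⟩
    have hv := valC' σ M hM i hi (x - vC σ M i) _ (by omega) rfl
    rw [hv, if_pos hd]
    omega
  · refine ⟨SzC M n i - 1 - (x - vC σ M i), by omega, ?_⟩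
    have hv := valC' σ M hM i hi (SzC M n i - 1 - (x - vC σ M i)) _ (by omega) rfl
    rw [hv, if_neg hd]
    omega

include hM in
lemma block_of_val (i : ℕ) (hi : i < idxM M n) (x : ℕ) (hx1 : vC σ M i ≤ x)
    (hx2 : x < vC σ M i + SzC M n i) :
    x < n ∧ idxM M (posv σ x) = i := by
  have hM1 : ∀ p ∈ M, p + 1 < n := hM1_of σ M hM
  obtain ⟨r, hr, hs⟩ := surjIv σ M hM i hi x hx1 hx2
  have hkn := (posC M hM1 i r hi hr).1
  have hxn : x < n := by
    rw [← hs]; exact sval_lt σ _ hkn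
  have hp := posv_eq σ (StC M n i + r) hkn x hs
  rw [hp]
  exact ⟨hxn, (posC M hM1 i r hi hr).2⟩

include hM in
lemma straddle (i j : ℕ) (hi : i < idxM M n) (hj : j < idxM M n) (x : ℕ)
    (hxi1 : vC σ M i ≤ x) (hxi2 : x < vC σ M i + SzC M n i)
    (hxj1 : vC σ M j ≤ x) (hxj2 : x < vC σ M j + SzC M n j) : i = j := by
  have h1 := (block_of_val σ M hM i hi x hxi1 hxi2).2
  have h2 := (block_of_val σ M hM j hj x hxj1 hxj2).2
  omega

include hM in
lemma bval_iff (x : ℕ) (hx : x < n) (j : ℕ) (hj : j < idxM M n) :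
    idxM M (posv σ x) = j ↔ (vC σ M j ≤ x ∧ x < vC σ M j + SzC M n j) := by
  constructor
  · intro h
    have h1 := memIv σ M hM (posv σ x) (posv_lt σ x hx)
    rw [sval_posv σ x hx, h] at h1
    exact h1
  · rintro ⟨h1, h2⟩
    exact (block_of_val σ M hM j hj x h1 h2).2

include hM in
lemma vC_lt_n (i : ℕ) (hi : i < idxM M n) : vC σ M i < n := by
  have hM1 : ∀ p ∈ M, p + 1 < n := hM1_of σ M hM
  have hszpos := SzC_pos M hM1 i hi
  rw [vC]
  split_ifs
  · have h0 := (posC M hM1 i 0 hi (by omega)).1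
    exact sval_lt σ _ (by omega)
  · exact sval_lt σ _ (posC M hM1 i (SzC M n i - 1) hi (by omega)).1

include hM in
lemma vC_sum (i : ℕ) (hi : i < idxM M n) :
    vC σ M i = ∑ j ∈ (Finset.range (idxM M n)).filter (fun j => vC σ M j < vC σ M i),
      SzC M n j := by
  have hM1 : ∀ p ∈ M, p + 1 < n := hM1_of σ M hM
  have hvn : vC σ M i < n := vC_lt_n σ M hM i hi
  have h1 : (Finset.range (vC σ M i)).card = vC σ M i := Finset.card_range _
  rw [Finset.card_eq_sum_card_fiberwise
    (f := fun x => idxM M (posv σ x)) (t := Finset.range (idxM M n)) ?ht] at h1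
  case ht =>
    intro x hx
    have hxn : x < n := by have := Finset.mem_range.mp hx; omega
    rw [Finset.mem_coe, Finset.mem_range]
    exact idxM_lt M hM1 (posv σ x) (posv_lt σ x hxn)
  have key : ∀ j ∈ Finset.range (idxM M n),
      ((Finset.range (vC σ M i)).filter (fun x => idxM M (posv σ x) = j)).card
        = if vC σ M j < vC σ M i then SzC M n j else 0 := by
    intro j hj
    have hjm : j < idxM M n := Finset.mem_range.mp hj
    have hszposj := SzC_pos M hM1 j hjm
    have hszposi := SzC_pos M hM1 i hi
    by_cases hc : vC σ M j + SzC M n j ≤ vC σ M i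
    · have hlt : vC σ M j < vC σ M i := by omega
      rw [if_pos hlt]
      have hset : (Finset.range (vC σ M i)).filter (fun x => idxM M (posv σ x) = j)
          = Finset.Ico (vC σ M j) (vC σ M j + SzC M n j) := by
        ext x
        simp only [Finset.mem_filter, Finset.mem_range, Finset.mem_Ico]
        constructor
        · rintro ⟨hx1, hx2⟩
          exact (bval_iff σ M hM x (by omega) j hjm).mp hx2
        · rintro ⟨hx1, hx2⟩
          have hxlt : x < vC σ M i := by omega
          exact ⟨hxlt, (bval_iff σ M hM x (by omega) j hjm).mpr ⟨hx1, hx2⟩⟩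
      rw [hset, Nat.card_Ico]
      omega
    · by_cases hc2 : vC σ M i ≤ vC σ M j
      · rw [if_neg (by omega)]
        rw [Finset.card_eq_zero, Finset.filter_eq_empty_iff]
        intro x hx
        have hx1 : x < vC σ M i := Finset.mem_range.mp hx
        intro hbv
        have := (bval_iff σ M hM x (by omega) j hjm).mp hbv
        omega
      · exfalso
        have hij := straddle σ M hM i j hi hjm (vC σ M i)
          (le_refl _) (by omega) (by omega) (by omega)
        rw [hij] at hc2
        exact hc2 (le_refl _)
  rw [Finset.sum_congr rfl key, ← Finset.sum_filter] at h1
  omega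

include hM in
lemma vC_inj (i j : ℕ) (hi : i < idxM M n) (hj : j < idxM M n)
    (h : vC σ M i = vC σ M j) : i = j := by
  have hM1 : ∀ p ∈ M, p + 1 < n := hM1_of σ M hM
  have hszposj := SzC_pos M hM1 j hj
  have hszposi := SzC_pos M hM1 i hi
  exact straddle σ M hM i j hi hj (vC σ M i) (le_refl _) (by omega) (by omega) (by omega)

end Intervals

section Realizer

variable {n : ℕ}

/-- total version of `R.size` -/
noncomputable def szN (R : RunData n) (j : ℕ) : ℕ :=
  if h : j < R.m then R.size ⟨j, h⟩ else 0

/-- partial sums of sizes -/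
noncomputable def FN (R : RunData n) (i : ℕ) : ℕ := ∑ j ∈ Finset.range i, szN R j

lemma szN_eq (R : RunData n) (i : Fin R.m) : szN R i.val = R.size i := by
  simp [szN]

lemma szN_pos (R : RunData n) {i : ℕ} (hi : i < R.m) : 1 ≤ szN R i := by
  rw [szN, dif_pos hi]
  exact R.size_pos _

lemma FN_zero (R : RunData n) : FN R 0 = 0 := by simp [FN]

lemma FN_succ (R : RunData n) (i : ℕ) : FN R (i + 1) = FN R i + szN R i :=
  Finset.sum_range_succ _ _

lemma FN_mono (R : RunData n) {i j : ℕ} (h : i ≤ j) : FN R i ≤ FN R j :=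
  Finset.sum_le_sum_of_subset (Finset.range_subset_range.mpr h)

lemma FN_top (R : RunData n) : FN R R.m = n := by
  have h : ∑ j ∈ Finset.range R.m, szN R j = ∑ j : Fin R.m, R.size j := by
    rw [← Fin.sum_univ_eq_sum_range (fun j => szN R j) R.m]
    exact Finset.sum_congr rfl fun j _ => szN_eq R j
  rw [FN, h, R.sum_eq]

lemma runStart_eq_FN (R : RunData n) (i : Fin R.m) : runStart R i = FN R i.val := by
  rw [runStart, Finset.sum_filter]
  have h1 : ∀ j : Fin R.m, (if (j : ℕ) < (i : ℕ) then R.size j else 0)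
      = (fun t => if t < (i : ℕ) then szN R t else 0) j.val := fun j => by
    simp [szN]
  rw [Finset.sum_congr rfl (fun j _ => h1 j),
    Fin.sum_univ_eq_sum_range (fun t => if t < (i : ℕ) then szN R t else 0) R.m, FN]
  rw [← Finset.sum_subset (Finset.range_subset_range.mpr i.isLt.le)
    (fun x hx hx' => by rw [if_neg]; simp at hx'; omega)]
  exact Finset.sum_congr rfl fun j hj => if_pos (Finset.mem_range.mp hj)

lemma block_unique (R : RunData n) {i j k : ℕ} (hi : i < R.m) (hj : j < R.m)
    (h1 : FN R i ≤ k) (h2 : k < FN R (i + 1)) (h3 : FN R j ≤ k) (h4 : k < FN R (j + 1)) :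
    i = j := by
  by_contra hne
  rcases Nat.lt_or_ge i j with h | h
  · have := FN_mono R (show i + 1 ≤ j from h)
    omega
  · have hji : j < i := by omega
    have := FN_mono R (show j + 1 ≤ i from hji)
    omega

lemma real_dec (R : RunData n) : ∀ j k, k < FN R j →
    ∃ i < j, FN R i ≤ k ∧ k < FN R (i + 1) := by
  intro j
  induction j with
  | zero => intro k hk; rw [FN_zero] at hk; omega
  | succ j ih =>
    intro k hk
    by_cases h : k < FN R j
    · obtain ⟨i, hi, h1, h2⟩ := ih k h
      exact ⟨i, by omega, h1, h2⟩
    · exact ⟨j, by omega, by omega, hk⟩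

variable (σ : Equiv.Perm (Fin n)) (M : Set ℕ)

lemma real_M_char (R : RunData n) (hreal : RealizesRun R σ M) :
    ∀ p, p ∈ M ↔ ∃ i, ∃ _ : i < R.m, ∃ r, r + 1 < szN R i ∧ p = FN R i + r := by
  intro p
  rw [hreal.2]
  simp only [Set.mem_setOf_eq]
  constructor
  · rintro ⟨i, r, hr, rfl⟩
    exact ⟨i.val, i.isLt, r, by rw [szN_eq]; exact hr, by rw [runStart_eq_FN]⟩
  · rintro ⟨i, hi, r, hr, rfl⟩
    refine ⟨⟨i, hi⟩, r, ?_, ?_⟩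
    · rw [← szN_eq R ⟨i, hi⟩]; exact hr
    · rw [runStart_eq_FN]

lemma real_idx (R : RunData n) (hreal : RealizesRun R σ M) :
    ∀ k i, i < R.m → FN R i ≤ k → k < FN R (i + 1) → idxM M k = i := by
  intro k
  induction k with
  | zero =>
    intro i hi h1 h2
    have hizero : i = 0 := by
      by_contra h
      have h0 : 0 < i := by omega
      have := FN_mono R (show 1 ≤ i from h0)
      have h1' := szN_pos R (show 0 < R.m by omega)
      have hA : FN R 1 = FN R 0 + szN R 0 := FN_succ R 0
      have hB := FN_zero R
      omega
    rw [hizero, idxM_zero]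
  | succ k ih =>
    intro i hi h1 h2
    by_cases hc : FN R i ≤ k
    · have hrM : k ∈ M := by
        rw [real_M_char σ M R hreal k]
        refine ⟨i, hi, k - FN R i, ?_, by omega⟩
        have := FN_succ R i
        omega
      have := idxM_succ M k
      rw [if_pos hrM] at this
      have hk2 : k < FN R (i + 1) := by omega
      have := ih i hi hc hk2
      omega
    · -- k + 1 = FN R i, so k is the last element of block i - 1
      have hFeq : FN R i = k + 1 := by omega
      have hipos : 0 < i := by
        by_contra h
        have : i = 0 := by omega
        rw [this, FN_zero] at hFeq
        omega
      have hfe : FN R (i - 1) + szN R (i - 1) = FN R i := by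
        rw [← FN_succ]
        congr 1
        omega
      have hszpos := szN_pos R (show i - 1 < R.m by omega)
      have hk1 : FN R (i - 1) ≤ k := by omega
      have hk2 : k < FN R (i - 1 + 1) := by
        rw [FN_succ]
        omega
      have hidxk : idxM M k = i - 1 := ih (i - 1) (by omega) hk1 hk2
      have hkM : k ∉ M := by
        intro hk
        obtain ⟨j, hj, r, hr, hpr⟩ := (real_M_char σ M R hreal k).mp hk
        have hj1 : FN R j ≤ k := by omega
        have hj2 : k < FN R (j + 1) := by
          rw [FN_succ]
          omega
        have := block_unique R hj (show i - 1 < R.m by omega) hj1 hj2 hk1 hk2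
        subst this
        omega
      have := idxM_succ M k
      rw [if_neg hkM] at this
      omega

lemma real_m (hM1 : ∀ p ∈ M, p + 1 < n) (R : RunData n) (hreal : RealizesRun R σ M) :
    R.m = idxM M n := by
  rcases Nat.eq_zero_or_pos n with hn | hn
  · subst hn
    rw [idxM_zero]
    by_contra h
    have hm : 0 < R.m := by omega
    have h1 := szN_pos R hm
    have h2 := FN_mono R (show 1 ≤ R.m from hm)
    have h3 := FN_top R
    have h4 : FN R 1 = FN R 0 + szN R 0 := FN_succ R 0
    have h5 := FN_zero R
    omega
  · have hm0 : 0 < R.m := by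
      by_contra h
      have hm' : R.m = 0 := by omega
      have htop := FN_top R
      rw [hm', FN_zero] at htop
      omega
    have hfe : FN R (R.m - 1) + szN R (R.m - 1) = FN R R.m := by
      rw [← FN_succ]
      congr 1
      omega
    have hszpos := szN_pos R (show R.m - 1 < R.m by omega)
    have htop := FN_top R
    have hb1 : FN R (R.m - 1) ≤ n - 1 := by omega
    have hb2 : n - 1 < FN R (R.m - 1 + 1) := by
      rw [FN_succ]
      omega
    have hidx := real_idx σ M R hreal (n - 1) (R.m - 1) (by omega) hb1 hb2
    have hnm : n - 1 ∉ M := fun h => by have := hM1 _ h; omega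
    have hs := idxM_succ M (n - 1)
    rw [if_neg hnm] at hs
    have he : n - 1 + 1 = n := by omega
    rw [he] at hs
    omega

lemma real_block_card (R : RunData n) (hreal : RealizesRun R σ M)
    (i : ℕ) (hi : i < R.m) : szN R i = SzC M n i := by
  have hset : (Finset.range n).filter (fun k => idxM M k = i)
      = Finset.Ico (FN R i) (FN R (i + 1)) := by
    ext k
    simp only [Finset.mem_filter, Finset.mem_range, Finset.mem_Ico]
    constructor
    · rintro ⟨hk, hik⟩
      obtain ⟨i', hi', h1, h2⟩ := real_dec R R.m k (by rw [FN_top]; exact hk)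
      have := real_idx σ M R hreal k i' hi' h1 h2
      have : i' = i := by omega
      subst this
      exact ⟨h1, h2⟩
    · rintro ⟨h1, h2⟩
      have hkn : k < n := by
        have := FN_mono R (show i + 1 ≤ R.m from hi)
        have := FN_top R
        omega
      exact ⟨hkn, real_idx σ M R hreal k i hi h1 h2⟩
  rw [SzC, hset, Nat.card_Ico, FN_succ]
  omega

lemma real_val (R : RunData n) (hreal : RealizesRun R σ M) {i : ℕ} (hi : i < R.m)
    {r : ℕ} (hr : r < szN R i) {k : ℕ} (hk : FN R i + r = k) (hkn : k < n) :
    sval σ k = runBase R ⟨i, hi⟩ +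
      (if R.dirn ⟨i, hi⟩ then r else szN R i - 1 - r) := by
  have hr' : r < R.size ⟨i, hi⟩ := by rw [← szN_eq R ⟨i, hi⟩]; exact hr
  have hrs : runStart R ⟨i, hi⟩ = FN R i := runStart_eq_FN R ⟨i, hi⟩
  have hpos : runStart R ⟨i, hi⟩ + r < n := by
    rw [hrs]
    omega
  have hval := hreal.1 ⟨i, hi⟩ r hr' hpos
  have hfin : (⟨runStart R ⟨i, hi⟩ + r, hpos⟩ : Fin n) = ⟨k, hkn⟩ := by
    apply Fin.ext
    simp only [hrs]
    omega
  rw [hfin] at hval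
  rw [sval_eq σ k hkn, hval]
  have hse : R.size ⟨i, hi⟩ = szN R i := (szN_eq R ⟨i, hi⟩).symm
  rw [hse]

lemma real_dirn (R : RunData n) (hreal : RealizesRun R σ M) {i : ℕ} (hi : i < R.m)
    (hsz2 : 2 ≤ szN R i) {k : ℕ} (hk : FN R i = k) :
    R.dirn ⟨i, hi⟩ = decide (sval σ k < sval σ (k + 1)) := by
  have hk1 : k + 1 < n := by
    have h1 := FN_succ R i
    have h2 := FN_mono R (show i + 1 ≤ R.m from hi)
    have h3 := FN_top R
    omega
  have e0 := real_val σ M R hreal hi (show 0 < szN R i by omega)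
    (show FN R i + 0 = k by omega) (show k < n by omega)
  have e1 := real_val σ M R hreal hi (show 1 < szN R i by omega)
    (show FN R i + 1 = k + 1 by omega) hk1
  cases hd : R.dirn ⟨i, hi⟩
  · rw [hd] at e0 e1
    simp only [Bool.false_eq_true, if_false] at e0 e1
    have hnlt : ¬ (sval σ k < sval σ (k + 1)) := by omega
    simp [hnlt]
  · rw [hd] at e0 e1
    simp only [if_true] at e0 e1
    have hlt : sval σ k < sval σ (k + 1) := by omega
    simp [hlt]

lemma real_base (R : RunData n) (hreal : RealizesRun R σ M) {i : ℕ} (hi : i < R.m)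
    {k : ℕ} (hk : FN R i = k) :
    runBase R ⟨i, hi⟩ + (if R.dirn ⟨i, hi⟩ then 0 else szN R i - 1) = sval σ k := by
  have hkn : k < n := by
    have h1 := FN_succ R i
    have h2 := FN_mono R (show i + 1 ≤ R.m from hi)
    have h3 := FN_top R
    have h4 := szN_pos R hi
    omega
  have e0 := real_val σ M R hreal hi (show 0 < szN R i from szN_pos R hi)
    (show FN R i + 0 = k by omega) hkn
  rw [e0]
  cases hd : R.dirn ⟨i, hi⟩ <;> simp

lemma runBase_lt_of (R : RunData n) (i j : Fin R.m) (h : R.perm j < R.perm i) :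
    runBase R j + R.size j ≤ runBase R i := by
  have hsub : insert j (Finset.univ.filter (fun j' => R.perm j' < R.perm j))
      ⊆ Finset.univ.filter (fun j' => R.perm j' < R.perm i) := by
    intro x hx
    simp only [Finset.mem_insert, Finset.mem_filter, Finset.mem_univ, true_and] at hx ⊢
    rcases hx with rfl | hx
    · exact h
    · exact hx.trans h
  have hs := Finset.sum_le_sum_of_subset (f := R.size) hsub
  rw [Finset.sum_insert (by simp)] at hs
  rw [runBase, runBase]
  omega

lemma runBase_lt (R : RunData n) (i j : Fin R.m) :
    R.perm j < R.perm i ↔ runBase R j < runBase R i := by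
  constructor
  · intro h
    have := runBase_lt_of R i j h
    have := R.size_pos j
    omega
  · intro h
    rcases lt_trichotomy (R.perm j) (R.perm i) with h' | h' | h'
    · exact h'
    · have : j = i := R.perm.injective h'
      subst this
      omega
    · have := runBase_lt_of R j i h'
      have := R.size_pos i
      omega

lemma perm_eq_of_lt_iff {m : ℕ} (p1 p2 : Equiv.Perm (Fin m))
    (h : ∀ i j, p1 i < p1 j ↔ p2 i < p2 j) : p1 = p2 := by
  have hs : StrictMono (fun x => p2 (p1.symm x)) := by
    intro x y hxy
    have hx : p1 (p1.symm x) < p1 (p1.symm y) := by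
      rw [Equiv.apply_symm_apply, Equiv.apply_symm_apply]
      exact hxy
    exact (h _ _).mp hx
  have hr : Set.range (fun x => p2 (p1.symm x)) = Set.range (id : Fin m → Fin m) := by
    rw [Set.range_id]
    exact (p2.surjective.comp p1.symm.surjective).range_eq
  have hid := (hs.range_inj strictMono_id).mp hr
  ext y
  have := congrFun hid (p1 y)
  simp only [Equiv.symm_apply_apply, id_eq] at this
  rw [this]

end Realizer

section Construction

variable {n : ℕ}

/-- the constructed run decomposition of the marked permutation `(σ, M)` -/
noncomputable def R0 (σ : Equiv.Perm (Fin n)) (M : Set ℕ)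
    (hM : ∀ p ∈ M, ∃ h : p + 1 < n,
      (((σ ⟨p, by omega⟩).val : ℤ) - ((σ ⟨p + 1, h⟩).val : ℤ)).natAbs = 1) :
    RunData n where
  m := idxM M n
  size := fun i => SzC M n i.val
  dirn := fun i => dC σ M i.val
  perm := (Tuple.sort (fun i : Fin (idxM M n) => vC σ M i.val))⁻¹
  size_pos := fun i => SzC_pos M (hM1_of σ M hM) i.val i.isLt
  sum_eq := by
    rw [Fin.sum_univ_eq_sum_range (fun j => SzC M n j) (idxM M n), ← StC_eq_sum,
      StC_top M (hM1_of σ M hM)]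

variable (σ : Equiv.Perm (Fin n)) (M : Set ℕ)
variable (hM : ∀ p ∈ M, ∃ h : p + 1 < n,
      (((σ ⟨p, by omega⟩).val : ℤ) - ((σ ⟨p + 1, h⟩).val : ℤ)).natAbs = 1)

lemma szN_R0 (j : ℕ) : szN (R0 σ M hM) j = SzC M n j := by
  by_cases h : j < idxM M n
  · rw [szN, dif_pos (show j < (R0 σ M hM).m from h)]
    rfl
  · rw [szN, dif_neg (show ¬ j < (R0 σ M hM).m from h),
      SzC_zero_of_ge M (hM1_of σ M hM) (le_of_not_gt h)]

lemma FN_R0 (i : ℕ) : FN (R0 σ M hM) i = StC M n i := by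
  rw [FN, StC_eq_sum]
  exact Finset.sum_congr rfl fun j _ => szN_R0 σ M hM j

lemma tau_lt (i j : Fin (R0 σ M hM).m) :
    (R0 σ M hM).perm j < (R0 σ M hM).perm i ↔ vC σ M j.val < vC σ M i.val := by
  set vF : Fin (idxM M n) → ℕ := fun k => vC σ M k.val with hvF
  have hinj : Function.Injective vF := by
    intro a b hab
    have := vC_inj σ M hM a.val b.val a.isLt b.isLt hab
    exact Fin.ext this
  have hmono := Tuple.monotone_sort vF
  have hstrict : StrictMono (vF ∘ Tuple.sort vF) :=
    hmono.strictMono_of_injective (hinj.comp (Equiv.injective _))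
  have key : ∀ k : Fin (idxM M n),
      (vF ∘ Tuple.sort vF) ((Tuple.sort vF)⁻¹ k) = vF k := fun k => by
    simp [Function.comp]
  show (Tuple.sort vF)⁻¹ j < (Tuple.sort vF)⁻¹ i ↔ vF j < vF i
  rw [← hstrict.lt_iff_lt]
  exact iff_of_eq (congrArg₂ (· < ·) (key j) (key i))

lemma base_R0 (i : Fin (R0 σ M hM).m) :
    runBase (R0 σ M hM) i = vC σ M i.val := by
  have hi : i.val < idxM M n := i.isLt
  rw [runBase, Finset.sum_filter]
  have step1 : ∀ j : Fin (R0 σ M hM).m,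
      (if (R0 σ M hM).perm j < (R0 σ M hM).perm i then (R0 σ M hM).size j else 0)
        = (fun t => if vC σ M t < vC σ M i.val then SzC M n t else 0) j.val := by
    intro j
    rw [if_congr (tau_lt σ M hM i j) rfl rfl]
    rfl
  rw [Finset.sum_congr rfl (fun j _ => step1 j)]
  show (∑ t : Fin (idxM M n),
    (fun t => if vC σ M t < vC σ M i.val then SzC M n t else 0) t.val) = vC σ M i.val
  rw [Fin.sum_univ_eq_sum_range (fun t => if vC σ M t < vC σ M i.val then SzC M n t else 0)
      (idxM M n), ← Finset.sum_filter]
  exact (vC_sum σ M hM i.val hi).symm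

lemma norm_R0 : ∀ i, (R0 σ M hM).size i = 1 → (R0 σ M hM).dirn i = true := by
  intro i hsz
  have hsz' : SzC M n i.val = 1 := hsz
  show dC σ M i.val = true
  rw [dC, eC, if_neg (by omega)]
  simp

lemma real_R0 : RealizesRun (R0 σ M hM) σ M := by
  have hM1 : ∀ p ∈ M, p + 1 < n := hM1_of σ M hM
  constructor
  · intro i r hr h
    have hi : i.val < idxM M n := i.isLt
    have hr' : r < SzC M n i.val := hr
    have hst : runStart (R0 σ M hM) i = StC M n i.val := by
      rw [runStart_eq_FN, FN_R0]
    have hkn : StC M n i.val + r < n := by rw [hst] at h; exact h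
    have hv := valC' σ M hM i.val hi r (StC M n i.val + r) hr' rfl
    have hfin : (⟨runStart (R0 σ M hM) i + r, h⟩ : Fin n)
        = ⟨StC M n i.val + r, hkn⟩ := by
      apply Fin.ext
      simp only [hst]
    rw [hfin, ← sval_eq σ (StC M n i.val + r) hkn, hv, base_R0 σ M hM i]
    rfl
  · ext p
    simp only [Set.mem_setOf_eq]
    constructor
    · intro hp
      have hpn := hM1 p hp
      have hilt : idxM M p < idxM M n := idxM_lt M hM1 p (by omega)
      have hidx : idxM M (p + 1) = idxM M p := by
        have := idxM_succ M p
        rw [if_pos hp] at this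
        omega
      have hb1 := (blockC M hM1 p (by omega) (idxM M p)).mp rfl
      have hb2 := (blockC M hM1 (p + 1) hpn (idxM M p)).mp hidx
      have hss := StC_succ M n (idxM M p)
      refine ⟨⟨idxM M p, hilt⟩, p - StC M n (idxM M p), ?_, ?_⟩
      · show p - StC M n (idxM M p) + 1 < SzC M n (idxM M p)
        omega
      · rw [runStart_eq_FN, FN_R0]
        show p = StC M n (idxM M p) + (p - StC M n (idxM M p))
        omega
    · rintro ⟨i, r, hr, rfl⟩
      have hilt : i.val < idxM M n := i.isLt
      have hr' : r + 1 < SzC M n i.val := hr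
      have h1 := (posC M hM1 i.val r hilt (by omega)).2
      have h2 := (posC M hM1 i.val (r + 1) hilt (by omega)).2
      have hst : runStart (R0 σ M hM) i = StC M n i.val := by
        rw [runStart_eq_FN, FN_R0]
      rw [hst]
      apply mem_of_idx_eq M (StC M n i.val + r)
      rw [show StC M n i.val + r + 1 = StC M n i.val + (r + 1) by omega, h1, h2]

end Construction

lemma realizer_unique {n : ℕ} (σ : Equiv.Perm (Fin n)) (M : Set ℕ)
    (hM1 : ∀ p ∈ M, p + 1 < n)
    (R1 R2 : RunData n)
    (h1 : (∀ i, R1.size i = 1 → R1.dirn i = true) ∧ RealizesRun R1 σ M)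
    (h2 : (∀ i, R2.size i = 1 → R2.dirn i = true) ∧ RealizesRun R2 σ M) :
    R1 = R2 := by
  obtain ⟨hn1, hr1⟩ := h1
  obtain ⟨hn2, hr2⟩ := h2
  have hm1 := real_m σ M hM1 R1 hr1
  have hm2 := real_m σ M hM1 R2 hr2
  have hsz : ∀ i, szN R1 i = szN R2 i := by
    intro i
    by_cases hi : i < idxM M n
    · rw [real_block_card σ M R1 hr1 i (by omega), real_block_card σ M R2 hr2 i (by omega)]
    · rw [szN, dif_neg (by omega), szN, dif_neg (by omega)]
  have hFN : ∀ i, FN R1 i = FN R2 i := fun i =>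
    Finset.sum_congr rfl fun j _ => hsz j
  have hm : R1.m = R2.m := by omega
  have hd : ∀ (i : ℕ) (hi1 : i < R1.m) (hi2 : i < R2.m),
      R1.dirn ⟨i, hi1⟩ = R2.dirn ⟨i, hi2⟩ := by
    intro i hi1 hi2
    by_cases hone : szN R1 i = 1
    · have e1 : R1.size ⟨i, hi1⟩ = 1 := by rw [← szN_eq R1 ⟨i, hi1⟩]; exact hone
      have e2 : R2.size ⟨i, hi2⟩ = 1 := by
        rw [← szN_eq R2 ⟨i, hi2⟩, ← hsz i]; exact hone
      rw [hn1 _ e1, hn2 _ e2]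
    · have hge : 2 ≤ szN R1 i := by have := szN_pos R1 hi1; omega
      have hge2 : 2 ≤ szN R2 i := by rw [← hsz i]; exact hge
      rw [real_dirn σ M R1 hr1 hi1 hge (rfl : FN R1 i = FN R1 i),
        real_dirn σ M R2 hr2 hi2 hge2 ((hFN i).symm : FN R2 i = FN R1 i)]
  have hb : ∀ (i : ℕ) (hi1 : i < R1.m) (hi2 : i < R2.m),
      runBase R1 ⟨i, hi1⟩ = runBase R2 ⟨i, hi2⟩ := by
    intro i hi1 hi2
    have e1 := real_base σ M R1 hr1 hi1 (rfl : FN R1 i = FN R1 i)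
    have e2 := real_base σ M R2 hr2 hi2 ((hFN i).symm : FN R2 i = FN R1 i)
    rw [hd i hi1 hi2, hsz i] at e1
    omega
  obtain ⟨m1, s1, d1, p1, sp1, se1⟩ := R1
  obtain ⟨m2, s2, d2, p2, sp2, se2⟩ := R2
  have hmm : m1 = m2 := hm
  subst hmm
  have hs : s1 = s2 := by
    funext j
    have e1 : szN (RunData.mk m1 s1 d1 p1 sp1 se1) j.val = s1 j :=
      szN_eq (RunData.mk m1 s1 d1 p1 sp1 se1) j
    have e2 : szN (RunData.mk m1 s2 d2 p2 sp2 se2) j.val = s2 j :=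
      szN_eq (RunData.mk m1 s2 d2 p2 sp2 se2) j
    have := hsz j.val
    omega
  subst hs
  have hdd : d1 = d2 := by
    funext j
    exact hd j.val j.isLt j.isLt
  subst hdd
  have hpp : p1 = p2 := by
    apply perm_eq_of_lt_iff
    intro a b
    have l1 := runBase_lt (RunData.mk m1 s1 d1 p1 sp1 se1) b a
    have l2 := runBase_lt (RunData.mk m1 s1 d1 p2 sp2 se2) b a
    have hba : runBase (RunData.mk m1 s1 d1 p1 sp1 se1) a
        = runBase (RunData.mk m1 s1 d1 p2 sp2 se2) a := hb a.val a.isLt a.isLt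
    have hbb : runBase (RunData.mk m1 s1 d1 p1 sp1 se1) b
        = runBase (RunData.mk m1 s1 d1 p2 sp2 se2) b := hb b.val b.isLt b.isLt
    have l2' := l2
    rw [← hba, ← hbb] at l2'
    exact l1.trans l2'.symm
  subst hpp
  rfl

/-- every marked permutation (a permutation `σ` together with a
set `M` of its bonds) corresponds to a unique pair of an arrowed composition
and a permutation of its parts, via inflation by monotone runs whose inner
bonds are exactly the marked ones. -/
theorem stmt18 {n : ℕ} (σ : Equiv.Perm (Fin n)) (M : Set ℕ)
    (hM : ∀ p ∈ M, ∃ h : p + 1 < n,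
      (((σ ⟨p, by omega⟩).val : ℤ) - ((σ ⟨p + 1, h⟩).val : ℤ)).natAbs = 1) :
    ∃! R : RunData n, (∀ i, R.size i = 1 → R.dirn i = true) ∧ RealizesRun R σ M := by
  have hM1 : ∀ p ∈ M, p + 1 < n := fun p hp => (hM p hp).choose
  refine ⟨R0 σ M hM, ⟨norm_R0 σ M hM, real_R0 σ M hM⟩, ?_⟩
  intro R' h'
  exact realizer_unique σ M hM1 R' (R0 σ M hM) h' ⟨norm_R0 σ M hM, real_R0 σ M hM⟩
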